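/- For any irrational real number α > 0 and any real β, there exist infinitely many pairs of positive integers (x, y) such that x·|y − αx − β| < 2. -/

import Mathlib

lemma tcheb_fin_den (α : ℝ) (N : ℕ) : {r : ℚ | |α - (r:ℝ)| < 1 ∧ r.den ≤ N}.Finite := by
  set B : ℕ := ⌈(|α| + 1) * N⌉₊ with hB
  apply Set.Finite.of_finite_image (f := fun r : ℚ => (r.num, r.den))
  · apply Set.Finite.subset (((Set.finite_Icc (-(B:ℤ)) B).prod (Set.finite_Icc 0 N)))
    rintro ⟨n, d⟩ ⟨r, ⟨hr1, hr2⟩, heq⟩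
    simp only [Prod.mk.injEq] at heq
    obtain ⟨rfl, rfl⟩ := heq
    have hd : (0:ℝ) < r.den := by exact_mod_cast r.pos
    have hrabs : |(r:ℝ)| ≤ |α| + 1 := by
      have := abs_sub_abs_le_abs_sub (r:ℝ) α
      rw [abs_sub_comm] at hr1
      linarith
    have hnum : |(r.num : ℝ)| ≤ (|α| + 1) * N := by
      have h1 : (r:ℝ) = r.num / r.den := Rat.cast_def r
      have h2 : |(r.num:ℝ)| = |(r:ℝ)| * r.den := by
        rw [h1, abs_div, abs_of_pos hd]
        field_simp
      rw [h2]
      have : (r.den : ℝ) ≤ N := by exact_mod_cast hr2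
      have h3 : (0:ℝ) ≤ |α| + 1 := by positivity
      nlinarith [abs_nonneg (r:ℝ), abs_nonneg α]
    have hnum' : |r.num| ≤ (B:ℤ) := by
      have : ((|r.num| : ℤ) : ℝ) ≤ (B:ℝ) := by
        push_cast
        calc |(r.num:ℝ)| ≤ (|α| + 1) * N := hnum
        _ ≤ B := Nat.le_ceil _
      exact_mod_cast this
    constructor
    · simpa [Set.mem_Icc] using abs_le.mp hnum'
    · simp [Set.mem_Icc, hr2]
  · rintro r hr s hs h
    simp only [Prod.mk.injEq] at h
    exact Rat.ext h.1 h.2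

lemma tcheb_large_den (α : ℝ) (hirr : Irrational α) (N : ℕ) :
    {r : ℚ | |α - (r:ℝ)| < 1 / (r.den : ℝ) ^ 2 ∧ N < r.den}.Infinite := by
  have hT := Real.infinite_rat_abs_sub_lt_one_div_den_sq_of_irrational hirr
  have hfin := tcheb_fin_den α N
  apply Set.Infinite.mono _ (hT.diff hfin)
  rintro r ⟨hr1, hr2⟩
  have hd : (1:ℝ) ≤ r.den := by exact_mod_cast r.pos
  have h1 : |α - (r:ℝ)| < 1 := by
    refine hr1.trans_le ?_
    rw [div_le_one (by positivity)]
    nlinarith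
  refine ⟨hr1, ?_⟩
  by_contra hle
  exact hr2 ⟨h1, Nat.le_of_not_lt hle⟩

lemma tcheb_construct (α β : ℝ) (hα : 0 < α) (M : ℕ) (hM : 2 ≤ α * M + β)
    (r : ℚ) (hr : |α - (r:ℝ)| < 1 / (r.den : ℝ) ^ 2) (hden : 10 * (M + 1) ≤ r.den) :
    ∃ x y : ℕ, 0 < x ∧ 0 < y ∧ |(y:ℝ) - α * x - β| ≤ 2 / r.den ∧
      (x : ℝ) * |(y:ℝ) - α * x - β| < 2 := by
  have hq0 : (0:ℤ) < (r.den : ℤ) := by exact_mod_cast r.pos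
  have hQ0 : (0:ℝ) < (r.den : ℝ) := by exact_mod_cast r.pos
  have hcop : IsCoprime (r.num) (r.den : ℤ) := by
    rw [Int.isCoprime_iff_gcd_eq_one]
    simpa [Int.gcd] using r.reduced
  obtain ⟨u, v, huv⟩ := hcop
  set t : ℤ := round ((r.den : ℝ) * β) with htdef
  have hAbd0 : |(r.den : ℝ) * β - (t:ℝ)| ≤ 1 / 2 := abs_sub_round _
  set a : ℤ := -t * u - (M + 1 : ℤ) with hadef
  set x' : ℤ := (M + 1 : ℤ) + a % r.den with hxdef
  have hxlb : (M + 1 : ℤ) ≤ x' := le_add_of_nonneg_right (Int.emod_nonneg a (by omega))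
  have hxub : x' ≤ (M : ℤ) + r.den := by
    have := Int.emod_lt_of_pos a hq0
    omega
  have hdvd : (r.den : ℤ) ∣ t + r.num * x' := by
    refine ⟨t * v - r.num * (a / r.den), ?_⟩
    have h1 : x' = (M + 1 : ℤ) + (a - r.den * (a / r.den)) := by
      rw [hxdef, Int.emod_def]
    rw [h1, hadef]
    linear_combination (-t : ℤ) * huv
  set y' : ℤ := (t + r.num * x') / r.den with hydef
  have hy : (r.den : ℤ) * y' = t + r.num * x' := Int.mul_ediv_cancel' hdvd
  clear_value t a x' y'
  clear hadef hxdef hydef htdef hdvd huv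
  -- real identities
  have hyR : ((r.den : ℝ)) * (y' : ℝ) = (t : ℝ) + (r.num : ℝ) * (x' : ℝ) := by
    exact_mod_cast congrArg (fun z : ℤ => (z : ℝ)) hy
  have hXlb : (M : ℝ) + 1 ≤ (x' : ℝ) := by exact_mod_cast hxlb
  have hXub : (x' : ℝ) ≤ (M : ℝ) + (r.den : ℝ) := by exact_mod_cast hxub
  have hQ10 : 10 * ((M:ℝ) + 1) ≤ (r.den : ℝ) := by exact_mod_cast hden
  obtain ⟨Q, hQ⟩ : ∃ Q : ℝ, Q = (r.den : ℝ) := ⟨_, rfl⟩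
  obtain ⟨X, hX⟩ : ∃ X : ℝ, X = (x' : ℝ) := ⟨_, rfl⟩
  obtain ⟨Y, hY⟩ : ∃ Y : ℝ, Y = (y' : ℝ) := ⟨_, rfl⟩
  obtain ⟨A, hA⟩ : ∃ A : ℝ, A = (t : ℝ) - Q * β := ⟨_, rfl⟩
  obtain ⟨B, hB⟩ : ∃ B : ℝ, B = (r.num : ℝ) - Q * α := ⟨_, rfl⟩
  have hX0 : (0:ℝ) < X := by rw [hX]; linarith [hXlb]
  have hAbd : |A| ≤ 1 / 2 := by
    rw [hA, hQ, abs_sub_comm]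
    exact hAbd0
  have hBbd : |B| < 1 / Q := by
    have h1 : B = -(Q * (α - (r:ℝ))) := by
      rw [hB, hQ, Rat.cast_def r]
      field_simp
      ring
    rw [h1, abs_neg, abs_mul, hQ, abs_of_pos hQ0]
    calc (r.den:ℝ) * |α - (r:ℝ)| < (r.den:ℝ) * (1 / (r.den:ℝ) ^ 2) :=
          mul_lt_mul_of_pos_left hr hQ0
      _ = 1 / (r.den:ℝ) := by
          rw [pow_two]
          rw [one_div, mul_inv, ← mul_assoc, mul_inv_cancel₀ (ne_of_gt hQ0), one_mul, one_div]
  have hQpos : (0:ℝ) < Q := by rw [hQ]; exact hQ0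
  have hM0 : (0:ℝ) ≤ (M:ℝ) := Nat.cast_nonneg M
  have hEeq : Y - α * X - β = (A + X * B) / Q := by
    rw [hY, hX, hA, hB, hQ, eq_div_iff (ne_of_gt hQ0)]
    linear_combination hyR
  have hMQ : (M : ℝ) + Q ≤ (11/10) * Q := by rw [hQ]; linarith
  have hXQub : X ≤ (M:ℝ) + Q := by rw [hX, hQ]; exact hXub
  have hinvQ : (0:ℝ) ≤ 1/Q := by positivity
  have h2 : X * |B| ≤ ((M:ℝ) + Q) * (1 / Q) :=
    mul_le_mul hXQub hBbd.le (abs_nonneg _) (by linarith)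
  have h3 : ((M:ℝ)+Q) * (1/Q) ≤ (11/10) * Q * (1/Q) := mul_le_mul_of_nonneg_right hMQ hinvQ
  have h4 : (11/10:ℝ) * Q * (1/Q) = 11/10 := by field_simp
  have h5 : |A + X * B| ≤ 8/5 := by
    have hA1 : |A + X * B| ≤ |A| + X * |B| := by
      calc |A + X * B| ≤ |A| + |X * B| := abs_add_le _ _
        _ = |A| + X * |B| := by rw [abs_mul, abs_of_pos hX0]
    linarith
  have hEbd8 : |Y - α * X - β| ≤ (8/5) / Q := by
    rw [hEeq, abs_div, abs_of_pos hQpos]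
    gcongr
  have hEbd : |Y - α * X - β| ≤ 2 / Q := by
    refine hEbd8.trans ?_
    gcongr
    norm_num
  have hprod : X * |Y - α * X - β| < 2 := by
    have h1 : X * |Y - α * X - β| ≤ ((M:ℝ) + Q) * ((8/5) / Q) :=
      mul_le_mul hXQub hEbd8 (abs_nonneg _) (by linarith)
    have h3' : ((M:ℝ)+Q) * ((8/5)/Q) ≤ (11/10) * Q * ((8/5)/Q) :=
      mul_le_mul_of_nonneg_right hMQ (by positivity)
    have h4' : (11/10:ℝ) * Q * ((8/5)/Q) = 44/25 := by field_simp; ring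
    linarith
  -- y' positivity
  have hQ2 : 2 / Q ≤ 1 := by
    rw [div_le_one hQpos, hQ]
    linarith
  have hY1 : (1:ℝ) ≤ Y := by
    have hax : 2 + α ≤ α * X + β := by
      have : α * ((M:ℝ) + 1) ≤ α * X := by
        apply mul_le_mul_of_nonneg_left _ (le_of_lt hα)
        rw [hX]; exact hXlb
      nlinarith
    have habs := abs_le.mp hEbd
    linarith [habs.1]
  have hy1 : (1:ℤ) ≤ y' := by
    rw [hY] at hY1
    exact_mod_cast hY1
  refine ⟨x'.toNat, y'.toNat, ?_, ?_, ?_, ?_⟩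
  · omega
  · omega
  · have hc1 : ((x'.toNat : ℕ) : ℝ) = X := by rw [hX]; exact_mod_cast Int.toNat_of_nonneg (by omega)
    have hc2 : ((y'.toNat : ℕ) : ℝ) = Y := by rw [hY]; exact_mod_cast Int.toNat_of_nonneg (by omega)
    rw [hc1, hc2, ← hQ]
    exact hEbd
  · have hc1 : ((x'.toNat : ℕ) : ℝ) = X := by rw [hX]; exact_mod_cast Int.toNat_of_nonneg (by omega)
    have hc2 : ((y'.toNat : ℕ) : ℝ) = Y := by rw [hY]; exact_mod_cast Int.toNat_of_nonneg (by omega)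
    rw [hc1, hc2]
    exact hprod

/-- Tchebychef's inhomogeneous Diophantine approximation theorem: for irrational
`α > 0` and any real `β`, there are infinitely many pairs of positive integers
`(x, y)` with `x * |y - α x - β| < 2`. -/
theorem tchebychef (α : ℝ) (hα : 0 < α) (hirr : Irrational α) (β : ℝ) :
    {p : ℕ × ℕ | 0 < p.1 ∧ 0 < p.2 ∧
      (p.1 : ℝ) * |(p.2 : ℝ) - α * p.1 - β| < 2}.Infinite := by
  by_cases hex : ∃ x0 y0 : ℕ, 0 < x0 ∧ (y0:ℝ) = α * x0 + β
  · -- Case A: β is exactly y0 - α x0; use homogeneous approximation shifted by (x0, y0)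
    obtain ⟨x0, y0, hx0, hxy⟩ := hex
    set N := x0 + ⌈1/α⌉₊ with hN
    have hT := tcheb_large_den α hirr N
    set T' := {r : ℚ | |α - (r:ℝ)| < 1 / (r.den : ℝ) ^ 2 ∧ N < r.den} with hT'
    have hnum : ∀ r ∈ T', 0 < r.num := by
      rintro r ⟨hr1, hr2⟩
      rw [Rat.num_pos]
      have hd1 : (1:ℝ) ≤ (r.den:ℝ) := by exact_mod_cast r.pos
      have hdN : (N:ℝ) + 1 ≤ (r.den:ℝ) := by exact_mod_cast hr2
      have hceil : 1/α ≤ (⌈1/α⌉₊ : ℝ) := Nat.le_ceil _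
      have hx0' : (0:ℝ) ≤ (x0:ℝ) := Nat.cast_nonneg x0
      have h1a : 1/α ≤ (N:ℝ) := by rw [hN]; push_cast; linarith
      have hQα : 1/(r.den:ℝ) < α := by
        rw [div_lt_iff₀ (by linarith)]
        have h2 : 1/α * α = 1 := by field_simp
        nlinarith
      have h3 : 1/(r.den:ℝ)^2 ≤ 1/(r.den:ℝ) := by
        apply one_div_le_one_div_of_le (by linarith)
        nlinarith
      have h4 : (0:ℝ) < (r:ℝ) := by
        have := abs_lt.mp hr1
        linarith
      exact_mod_cast h4
    have hinj : Set.InjOn (fun r : ℚ => (x0 + r.den, y0 + r.num.toNat)) T' := by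
      rintro r hr s hs h
      simp only [Prod.mk.injEq] at h
      have h1 : r.den = s.den := by omega
      have h2 : r.num = s.num := by
        have hr' := hnum r hr
        have hs' := hnum s hs
        omega
      exact Rat.ext h2 h1
    apply Set.Infinite.mono _ (hT.image hinj)
    rintro p ⟨r, ⟨hr1, hr2⟩, rfl⟩
    have hrnum := hnum r ⟨hr1, hr2⟩
    have hd0 : (0:ℝ) < (r.den:ℝ) := by exact_mod_cast r.pos
    have hx0d : (x0:ℝ) ≤ (r.den:ℝ) := by
      have : x0 ≤ r.den := by omega
      exact_mod_cast this
    simp only [Set.mem_setOf_eq]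
    refine ⟨by omega, by omega, ?_⟩
    have hnt : ((r.num.toNat : ℕ) : ℝ) = (r.num : ℝ) := by
      exact_mod_cast Int.toNat_of_nonneg (le_of_lt hrnum)
    have hcast : ((y0 + r.num.toNat : ℕ) : ℝ) - α * ((x0 + r.den : ℕ) : ℝ) - β
        = (r.num : ℝ) - α * (r.den : ℝ) := by
      push_cast
      rw [hnt]
      linarith [hxy]
    simp only [hcast]
    have hval : (r.num : ℝ) - α * (r.den : ℝ) = -((r.den:ℝ) * (α - (r:ℝ))) := by
      rw [Rat.cast_def r]
      field_simp
      ring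
    have habs : |(r.num : ℝ) - α * (r.den : ℝ)| < 1 / (r.den:ℝ) := by
      rw [hval, abs_neg, abs_mul, abs_of_pos hd0]
      calc (r.den:ℝ) * |α - (r:ℝ)| < (r.den:ℝ) * (1 / (r.den:ℝ)^2) :=
            mul_lt_mul_of_pos_left hr1 hd0
        _ = 1 / (r.den:ℝ) := by
            rw [pow_two, one_div, mul_inv, ← mul_assoc,
              mul_inv_cancel₀ (ne_of_gt hd0), one_mul, one_div]
    have hp1 : (0:ℝ) < ((x0 + r.den : ℕ) : ℝ) := by positivity
    calc ((x0 + r.den : ℕ) : ℝ) * |(r.num : ℝ) - α * (r.den : ℝ)|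
        < ((x0 + r.den : ℕ) : ℝ) * (1 / (r.den:ℝ)) := mul_lt_mul_of_pos_left habs hp1
      _ ≤ 2 := by
          rw [mul_one_div, div_le_iff₀ hd0]
          push_cast
          linarith
  · -- Case B: no exact pair
    push_neg at hex
    by_contra hfin
    rw [Set.not_infinite] at hfin
    set M := ⌈(2 - β)/α⌉₊ with hMdef
    have hM : 2 ≤ α * M + β := by
      have h1 : (2 - β)/α ≤ (M:ℝ) := Nat.le_ceil _
      rw [div_le_iff₀ hα] at h1
      nlinarith
    -- a first element to make the finset nonempty
    obtain ⟨r₀, hr₀1, hr₀2⟩ := (tcheb_large_den α hirr (10*(M+1))).nonempty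
    obtain ⟨x₀, y₀, hx₀, hy₀, _, hp₀⟩ :=
      tcheb_construct α β hα M hM r₀ hr₀1 (le_of_lt hr₀2)
    have hmem₀ : (x₀, y₀) ∈ {p : ℕ × ℕ | 0 < p.1 ∧ 0 < p.2 ∧
        (p.1 : ℝ) * |(p.2 : ℝ) - α * p.1 - β| < 2} := ⟨hx₀, hy₀, hp₀⟩
    set F := hfin.toFinset with hF
    have hFne : F.Nonempty := ⟨(x₀, y₀), hfin.mem_toFinset.mpr hmem₀⟩
    set ε := F.inf' hFne (fun p => |(p.2:ℝ) - α * p.1 - β|) with hε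
    have hεpos : 0 < ε := by
      rw [hε, Finset.lt_inf'_iff]
      intro p hp
      have hpS := hfin.mem_toFinset.mp hp
      obtain ⟨hp1, hp2, _⟩ := hpS
      rw [abs_pos]
      intro hzero
      exact hex p.1 p.2 hp1 (by linarith)
    obtain ⟨r, hr1, hr2⟩ :=
      (tcheb_large_den α hirr (max (10*(M+1)) ⌈2/ε⌉₊)).nonempty
    have hden : 10*(M+1) ≤ r.den := le_of_lt (lt_of_le_of_lt (le_max_left _ _) hr2)
    obtain ⟨x, y, hx, hy, herr, hprod⟩ := tcheb_construct α β hα M hM r hr1 hden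
    have hmem : (x, y) ∈ {p : ℕ × ℕ | 0 < p.1 ∧ 0 < p.2 ∧
        (p.1 : ℝ) * |(p.2 : ℝ) - α * p.1 - β| < 2} := ⟨hx, hy, hprod⟩
    have hle : ε ≤ |(y:ℝ) - α * x - β| :=
      Finset.inf'_le _ (hfin.mem_toFinset.mpr hmem)
    have hd0 : (0:ℝ) < (r.den:ℝ) := by exact_mod_cast r.pos
    have hdenε : 2/ε + 1 ≤ (r.den:ℝ) := by
      have h1 : ⌈2/ε⌉₊ + 1 ≤ r.den := by
        have := lt_of_le_of_lt (le_max_right (10*(M+1)) ⌈2/ε⌉₊) hr2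
        omega
      have h2 : 2/ε ≤ (⌈2/ε⌉₊ : ℝ) := Nat.le_ceil _
      have h3 : ((⌈2/ε⌉₊ + 1 : ℕ) : ℝ) ≤ (r.den:ℝ) := by exact_mod_cast h1
      push_cast at h3
      linarith
    have hsmall : 2/(r.den:ℝ) < ε := by
      rw [div_lt_iff₀ hd0]
      have h4 : ε * (2/ε) = 2 := by field_simp
      nlinarith
    linarith
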